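/- Let k ≥ 1 and let P : ℝⁿ → ℝ^k be smooth such that M = P⁻¹({0}) is compact and nonempty and the derivative DP(m) : ℝⁿ → ℝ^k is surjective at every m ∈ M. Then there exist constants δ > 0 and C > 0 such that for every x ∈ ℝⁿ with dist(x, M) ≤ δ: |P(x)| ≥ C · dist(x, M). -/

import Mathlib

set_option maxHeartbeats 1000000

open Metric Set Filter

/-- Local Newton-iteration estimate near a regular zero of `P`. -/
lemma local_newton_est (n k : ℕ)
    (P : (Fin n → ℝ) → (Fin k → ℝ)) (hP : ContDiff ℝ (⊤ : ℕ∞) P)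
    (m : Fin n → ℝ) (hm : P m = 0)
    (hsurjm : Function.Surjective (fderiv ℝ P m)) :
    ∃ ρ > (0 : ℝ), ∃ K > (0 : ℝ), ∀ x ∈ Metric.closedBall m ρ,
      Metric.infDist x (P ⁻¹' {0}) ≤ K * ‖P x‖ := by
  set A := fderiv ℝ P m with hA
  obtain ⟨B₀, hB₀⟩ := (A : (Fin n → ℝ) →ₗ[ℝ] (Fin k → ℝ)).exists_rightInverse_of_surjective
    (LinearMap.range_eq_top.2 hsurjm)
  set B := LinearMap.toContinuousLinearMap B₀ with hBdef
  have hAB : ∀ v, A (B v) = v := fun v => by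
    have := LinearMap.congr_fun hB₀ v
    simp at this; exact this
  set K : ℝ := ‖B‖ + 1 with hKdef
  have hK : 0 < K := by positivity
  have hKne : K ≠ 0 := ne_of_gt hK
  have hBle : ∀ v, ‖B v‖ ≤ K * ‖v‖ := fun v =>
    le_trans (B.le_opNorm v) (mul_le_mul_of_nonneg_right (by simp [hKdef]) (norm_nonneg v))
  set ε : ℝ := 1 / (2 * K) with hεdef
  have hεpos : 0 < ε := by positivity
  have hεK : ε * K = 1 / 2 := by rw [hεdef]; field_simp
  -- choose a ball on which the derivative is ε-close to A
  have hdc : Continuous fun y => fderiv ℝ P y := hP.continuous_fderiv (by simp)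
  have hopen : IsOpen {y | ‖fderiv ℝ P y - A‖ < ε} :=
    isOpen_lt ((hdc.sub continuous_const).norm) continuous_const
  have hmmem : m ∈ {y | ‖fderiv ℝ P y - A‖ < ε} := by
    simp only [mem_setOf_eq, ← hA, sub_self, norm_zero]
    exact hεpos
  obtain ⟨r, hr, hball⟩ := Metric.isOpen_iff.1 hopen m hmmem
  have hdiff : ∀ y ∈ Metric.closedBall m (r / 2), DifferentiableAt ℝ P y :=
    fun y _ => hP.differentiable (by simp) y
  have hbound : ∀ y ∈ Metric.closedBall m (r / 2), ‖fderiv ℝ P y - A‖ ≤ ε := by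
    intro y hy
    have : y ∈ Metric.ball m r := Metric.mem_ball.2 (lt_of_le_of_lt hy (by linarith))
    exact le_of_lt (hball this)
  have mvt : ∀ y ∈ Metric.closedBall m (r / 2), ∀ z ∈ Metric.closedBall m (r / 2),
      ‖P z - P y - A (z - y)‖ ≤ ε * ‖z - y‖ := fun y hy z hz =>
    (convex_closedBall m (r / 2)).norm_image_sub_le_of_norm_fderiv_le' hdiff hbound hy hz
  set L : ℝ := ε + ‖A‖ + 1 with hLdef
  have hL : 0 < L := by positivity
  set ρ : ℝ := min (r / 4) (r / (8 * K * L)) with hρdef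
  have hρpos : 0 < ρ := lt_min (by linarith) (by positivity)
  have hρr4 : ρ ≤ r / 4 := min_le_left _ _
  have hρKL : ρ ≤ r / (8 * K * L) := min_le_right _ _
  have hLge : ε + ‖A‖ ≤ L := by rw [hLdef]; linarith
  have hLne : L ≠ 0 := ne_of_gt hL
  have h2Kpos : (0 : ℝ) < 2 * K := by linarith
  clear_value B K ε L ρ
  refine ⟨ρ, hρpos, 2 * K, h2Kpos, ?_⟩
  intro x hx
  have hxm : ‖x - m‖ ≤ ρ := by rw [← dist_eq_norm]; exact hx
  have hxm4 : ‖x - m‖ ≤ r / 4 := le_trans hxm hρr4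
  have hxs : x ∈ Metric.closedBall m (r / 2) :=
    Metric.closedBall_subset_closedBall (by linarith) hx
  have hmself : m ∈ Metric.closedBall m (r / 2) :=
    Metric.mem_closedBall_self (by linarith)
  -- bound ‖P x‖ on the small ball
  have hPxb : ‖P x‖ ≤ (ε + ‖A‖) * ρ := by
    have h1 := mvt m hmself x hxs
    rw [hm] at h1
    have h2 : ‖A (x - m)‖ ≤ ‖A‖ * ‖x - m‖ := A.le_opNorm _
    have h3 : ‖P x‖ ≤ ‖P x - 0 - A (x - m)‖ + ‖A (x - m)‖ := by
      have e : P x = (P x - 0 - A (x - m)) + A (x - m) := by abel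
      calc ‖P x‖ = ‖(P x - 0 - A (x - m)) + A (x - m)‖ := by rw [← e]
        _ ≤ _ := norm_add_le _ _
    have h4 : ε * ‖x - m‖ ≤ ε * ρ := mul_le_mul_of_nonneg_left hxm (le_of_lt hεpos)
    have h5 : ‖A‖ * ‖x - m‖ ≤ ‖A‖ * ρ := mul_le_mul_of_nonneg_left hxm (norm_nonneg _)
    have h6 : (ε + ‖A‖) * ρ = ε * ρ + ‖A‖ * ρ := by ring
    linarith
  have hx2K : 2 * K * ‖P x‖ ≤ r / 4 := by
    have h0 : 2 * K * L * ρ ≤ 2 * K * L * (r / (8 * K * L)) := mul_le_mul_of_nonneg_left hρKL (by positivity)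
    have h1 : 2 * K * L * (r / (8 * K * L)) = r / 4 := by field_simp; ring
    have h2 : 2 * K * ‖P x‖ ≤ 2 * K * ((ε + ‖A‖) * ρ) :=
      mul_le_mul_of_nonneg_left hPxb (le_of_lt h2Kpos)
    have h3 : (ε + ‖A‖) * ρ ≤ L * ρ := mul_le_mul_of_nonneg_right hLge (le_of_lt hρpos)
    have h4 : 2 * K * ((ε + ‖A‖) * ρ) ≤ 2 * K * (L * ρ) :=
      mul_le_mul_of_nonneg_left h3 (le_of_lt h2Kpos)
    have h5 : 2 * K * (L * ρ) = 2 * K * L * ρ := by ring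
    linarith
  -- Newton iteration
  set seq : ℕ → (Fin n → ℝ) := fun j => Nat.rec x (fun _ y => y - B (P y)) j with hseqdef
  have hseq0 : seq 0 = x := rfl
  have hseqS : ∀ j, seq (j + 1) = seq j - B (P (seq j)) := fun j => rfl
  clear_value seq
  clear hseqdef
  have memball : ∀ z : Fin n → ℝ, ‖z - x‖ ≤ 2 * K * ‖P x‖ →
      z ∈ Metric.closedBall m (r / 2) := by
    intro z hz
    rw [Metric.mem_closedBall, dist_eq_norm]
    have e : z - m = (z - x) + (x - m) := by abel
    rw [e]
    calc ‖z - x + (x - m)‖ ≤ ‖z - x‖ + ‖x - m‖ := norm_add_le _ _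
      _ ≤ 2 * K * ‖P x‖ + (r / 4) := add_le_add hz hxm4
      _ ≤ r / 4 + r / 4 := add_le_add hx2K le_rfl
      _ = r / 2 := by ring
  have hNx : (0 : ℝ) ≤ ‖P x‖ := norm_nonneg _
  have key : ∀ j, ‖P (seq j)‖ ≤ (1 / 2) ^ j * ‖P x‖ ∧
      ‖seq j - x‖ ≤ 2 * K * ‖P x‖ * (1 - (1 / 2) ^ j) := by
    intro j
    induction j with
    | zero =>
      rw [hseq0]
      constructor <;> norm_num
    | succ j ih =>
      obtain ⟨ha, hb⟩ := ih
      have hq0 : (0 : ℝ) < (1 / 2) ^ j := by positivity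
      have hq1 : ((1 : ℝ) / 2) ^ j ≤ 1 := pow_le_one₀ (by norm_num) (by norm_num)
      have hKN : (0 : ℝ) ≤ 2 * K * ‖P x‖ := mul_nonneg (le_of_lt h2Kpos) hNx
      have hmemj : seq j ∈ Metric.closedBall m (r / 2) := by
        apply memball
        nlinarith [mul_nonneg hKN (le_of_lt hq0)]
      have hstep : ‖seq (j + 1) - seq j‖ ≤ K * ((1 / 2) ^ j * ‖P x‖) := by
        rw [hseqS]
        have e : seq j - B (P (seq j)) - seq j = -(B (P (seq j))) := by abel
        rw [e, norm_neg]
        calc ‖B (P (seq j))‖ ≤ K * ‖P (seq j)‖ := hBle _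
          _ ≤ K * ((1 / 2) ^ j * ‖P x‖) := mul_le_mul_of_nonneg_left ha (le_of_lt hK)
      have hb' : ‖seq (j + 1) - x‖ ≤ 2 * K * ‖P x‖ * (1 - (1 / 2) ^ (j + 1)) := by
        have h1 : ‖seq (j + 1) - x‖ ≤ ‖seq (j + 1) - seq j‖ + ‖seq j - x‖ := by
          have e : seq (j + 1) - x = (seq (j + 1) - seq j) + (seq j - x) := by abel
          rw [e]; exact norm_add_le _ _
        have hp : ((1 : ℝ) / 2) ^ (j + 1) = (1 / 2) ^ j * (1 / 2) := pow_succ _ _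
        nlinarith
      have hmemj1 : seq (j + 1) ∈ Metric.closedBall m (r / 2) := by
        apply memball
        have hq0' : (0:ℝ) < (1/2) ^ (j+1) := by positivity
        nlinarith [mul_nonneg hKN (le_of_lt hq0'), hb']
      refine ⟨?_, hb'⟩
      have hmvt := mvt (seq j) hmemj (seq (j + 1)) hmemj1
      have hAapp : A (seq (j + 1) - seq j) = -(P (seq j)) := by
        rw [hseqS]
        have e : seq j - B (P (seq j)) - seq j = -(B (P (seq j))) := by abel
        rw [e, map_neg, hAB]
      rw [hAapp] at hmvt
      have e2 : P (seq (j + 1)) - P (seq j) - -(P (seq j)) = P (seq (j + 1)) := by abel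
      rw [e2] at hmvt
      calc ‖P (seq (j + 1))‖ ≤ ε * ‖seq (j + 1) - seq j‖ := hmvt
        _ ≤ ε * (K * ((1 / 2) ^ j * ‖P x‖)) :=
            mul_le_mul_of_nonneg_left hstep (le_of_lt hεpos)
        _ = (ε * K) * ((1 / 2) ^ j * ‖P x‖) := by ring
        _ = (1 / 2) ^ (j + 1) * ‖P x‖ := by rw [hεK, pow_succ]; ring
  have hcauchy : CauchySeq seq := by
    apply cauchySeq_of_le_geometric (1 / 2) (K * ‖P x‖) (by norm_num)
    intro j
    have ha := (key j).1
    rw [dist_eq_norm, norm_sub_rev, hseqS]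
    have e : seq j - B (P (seq j)) - seq j = -(B (P (seq j))) := by abel
    rw [e, norm_neg]
    calc ‖B (P (seq j))‖ ≤ K * ‖P (seq j)‖ := hBle _
      _ ≤ K * ((1 / 2) ^ j * ‖P x‖) := mul_le_mul_of_nonneg_left ha (le_of_lt hK)
      _ = K * ‖P x‖ * (1 / 2) ^ j := by ring
  obtain ⟨y, hy⟩ := cauchySeq_tendsto_of_complete hcauchy
  have hPy : P y = 0 := by
    have h1 : Tendsto (fun j => P (seq j)) atTop (nhds (P y)) :=
      (hP.continuous.tendsto y).comp hy
    have h2 : Tendsto (fun j => P (seq j)) atTop (nhds 0) := by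
      rw [tendsto_zero_iff_norm_tendsto_zero]
      apply squeeze_zero (fun j => norm_nonneg _) (fun j => (key j).1)
      have h3 := tendsto_pow_atTop_nhds_zero_of_lt_one
        (by norm_num : (0:ℝ) ≤ 1 / 2) (by norm_num : (1:ℝ) / 2 < 1)
      simpa using h3.mul_const ‖P x‖
    exact tendsto_nhds_unique h1 h2
  have hdxy : dist x y ≤ 2 * K * ‖P x‖ := by
    have h3 : Tendsto (fun j => dist x (seq j)) atTop (nhds (dist x y)) :=
      tendsto_const_nhds.dist hy
    apply le_of_tendsto h3
    filter_upwards with j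
    rw [dist_eq_norm, norm_sub_rev]
    have hb := (key j).2
    have hq0 : (0 : ℝ) < (1 / 2) ^ j := by positivity
    have hKN : (0 : ℝ) ≤ 2 * K * ‖P x‖ := mul_nonneg (le_of_lt h2Kpos) hNx
    nlinarith [mul_nonneg hKN (le_of_lt hq0)]
  have hyM : y ∈ P ⁻¹' {0} := by simp [hPy]
  calc Metric.infDist x (P ⁻¹' {0}) ≤ dist x y := Metric.infDist_le_dist_of_mem hyM
    _ ≤ 2 * K * ‖P x‖ := hdxy

/-- If `P : ℝⁿ → ℝᵏ` is smooth, with `M = P⁻¹({0})` compact and nonempty and `DP(m)`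
surjective at every `m ∈ M`, then `|P(x)| ≥ C·dist(x, M)` for all `x` with
`dist(x, M) ≤ δ`. -/
theorem norm_ge_dist_of_regular_level_set
    (n k : ℕ) (hk : 1 ≤ k)
    (P : (Fin n → ℝ) → (Fin k → ℝ)) (hP : ContDiff ℝ (⊤ : ℕ∞) P)
    (hMc : IsCompact (P ⁻¹' {0})) (hMne : (P ⁻¹' {0}).Nonempty)
    (hsurj : ∀ m ∈ P ⁻¹' {0}, Function.Surjective (fderiv ℝ P m)) :
    ∃ δ > (0 : ℝ), ∃ C > (0 : ℝ), ∀ x : Fin n → ℝ,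
      Metric.infDist x (P ⁻¹' {0}) ≤ δ →
      C * Metric.infDist x (P ⁻¹' {0}) ≤ ‖P x‖ := by
  have hloc : ∀ m ∈ P ⁻¹' {0}, ∃ ρ > (0 : ℝ), ∃ K > (0 : ℝ),
      ∀ x ∈ Metric.closedBall m ρ, Metric.infDist x (P ⁻¹' {0}) ≤ K * ‖P x‖ :=
    fun m hm => local_newton_est n k P hP m (by simpa using hm) (hsurj m hm)
  choose! ρ hρ K hK hest using hloc
  -- finite subcover
  set M := P ⁻¹' {0} with hMdef
  have hcov : M ⊆ ⋃ i : M, Metric.ball (i : Fin n → ℝ) (ρ i / 2) := by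
    intro m hm
    exact mem_iUnion.2 ⟨⟨m, hm⟩, Metric.mem_ball_self (by simpa using half_pos (hρ m hm))⟩
  obtain ⟨t, ht⟩ := hMc.elim_finite_subcover
    (fun i : M => Metric.ball (i : Fin n → ℝ) (ρ i / 2))
    (fun i => Metric.isOpen_ball) hcov
  have htne : t.Nonempty := by
    obtain ⟨m₀, hm₀⟩ := hMne
    obtain ⟨i, hit, _⟩ := mem_iUnion₂.1 (ht hm₀)
    exact ⟨i, hit⟩
  set δ : ℝ := t.inf' htne (fun i => ρ i / 2) with hδdef
  have hδpos : 0 < δ := by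
    rw [hδdef, Finset.lt_inf'_iff]
    exact fun i hit => half_pos (hρ i i.2)
  set Ksup : ℝ := t.sup' htne (fun i => K i) with hKsupdef
  have hKsuppos : 0 < Ksup := by
    obtain ⟨i, hit⟩ := htne
    exact lt_of_lt_of_le (hK i i.2) (Finset.le_sup' (fun i : M => K i) hit)
  refine ⟨δ, hδpos, 1 / Ksup, one_div_pos.2 hKsuppos, ?_⟩
  intro x hxδ
  obtain ⟨y, hyM, hyd⟩ := hMc.exists_infDist_eq_dist hMne x
  obtain ⟨i, hit, hyi⟩ := mem_iUnion₂.1 (ht hyM)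
  have hδi : δ ≤ ρ i / 2 := Finset.inf'_le _ hit
  have hxi : x ∈ Metric.closedBall (i : Fin n → ℝ) (ρ i) := by
    rw [Metric.mem_closedBall]
    have h1 : dist x (i : Fin n → ℝ) ≤ dist x y + dist y (i : Fin n → ℝ) := dist_triangle _ _ _
    have h2 : dist y (i : Fin n → ℝ) < ρ i / 2 := Metric.mem_ball.1 hyi
    have h3 : dist x y ≤ δ := by rw [← hyd]; exact hxδ
    linarith
  have h4 : Metric.infDist x M ≤ K i * ‖P x‖ := hest i i.2 x hxi
  have h5 : K (i : Fin n → ℝ) ≤ Ksup := Finset.le_sup' (fun i : M => K i) hit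
  have h6 : Metric.infDist x M ≤ Ksup * ‖P x‖ :=
    le_trans h4 (mul_le_mul_of_nonneg_right h5 (norm_nonneg _))
  have h7 : (1 / Ksup) * Metric.infDist x M ≤ (1 / Ksup) * (Ksup * ‖P x‖) :=
    mul_le_mul_of_nonneg_left h6 (le_of_lt (one_div_pos.2 hKsuppos))
  have h8 : (1 / Ksup) * (Ksup * ‖P x‖) = ‖P x‖ := by
    field_simp
  linarith
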